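/- Monotonicity of the distributed LS-EM iteration: fix α, β > 0 and p ∈ (0,1); define V(x, π) as the EM objective and suppose 0 < τ ≤ 1/μ where μ ≥ ‖A^T W A‖ for all diagonal weight matrices W with entries in [1/β², 1/α²]. If x^{(t+1)} = (I - τ L_{W^{(t)}}) x^{(t)} + τ A^T W^{(t)} b with W^{(t)} determined by π^{(t)}, and π^{(t+1)}_e = f(z_e = 1 | x^{(t+1)}, α, β), then V(x^{(t+1)}, π^{(t+1)}) ≤ V(x^{(t)}, π^{(t)}) for all t. -/

import Mathlib

open Matrix Filter Set

/-- `A` is the signed edge–incidence matrix of a connected undirected graph with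
edge set `E` and vertex set `V`. -/
def IsConnectedIncidence {E V : Type*} [DecidableEq V] (A : Matrix E V ℝ) : Prop :=
  ∃ src tgt : E → V, (∀ e, src e ≠ tgt e) ∧
    (∀ e v, A e v = (if v = src e then 1 else 0) - (if v = tgt e then 1 else 0)) ∧
    (SimpleGraph.fromRel fun u v => ∃ e, src e = u ∧ tgt e = v).Connected

/-- `Ld` is the Moore–Penrose pseudoinverse of `L`. -/
def IsMoorePenrose {n : Type*} [Fintype n] (L Ld : Matrix n n ℝ) : Prop :=
  L * Ld * L = L ∧ Ld * L * Ld = Ld ∧ (L * Ld)ᵀ = L * Ld ∧ (Ld * L)ᵀ = Ld * L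

/-- The spectral (`ℓ²`-operator) norm of a real matrix. -/
noncomputable def specNorm {m n : Type*} [Fintype m] [Fintype n] [DecidableEq n]
    (M : Matrix m n ℝ) : ℝ :=
  ‖LinearMap.toContinuousLinearMap (Matrix.toEuclideanLin M)‖

section Aux

open scoped RealInnerProductSpace

lemma LSEM_quadform_le {n : Type*} [Fintype n] [DecidableEq n] (M : Matrix n n ℝ) (v : n → ℝ) :
    M.mulVec v ⬝ᵥ v ≤ specNorm M * (v ⬝ᵥ v) := by
  set T := LinearMap.toContinuousLinearMap (Matrix.toEuclideanLin M) with hT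
  set v' : EuclideanSpace ℝ n := (WithLp.equiv 2 (n → ℝ)).symm v with hv'
  have h1 : M.mulVec v ⬝ᵥ v = ⟪T v', v'⟫ := by
    simp only [hT, hv', LinearMap.coe_toContinuousLinearMap', PiLp.inner_apply,
      RCLike.inner_apply, conj_trivial, Matrix.toEuclideanLin_apply,
      WithLp.equiv_symm_apply, WithLp.ofLp_toLp, dotProduct,
      Equiv.apply_symm_apply]
    exact Finset.sum_congr rfl fun _ _ => mul_comm _ _
  have h2 : v ⬝ᵥ v = ‖v'‖ ^ 2 := by
    rw [← real_inner_self_eq_norm_sq]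
    simp [hv', PiLp.inner_apply, RCLike.inner_apply, dotProduct]
    rw [EuclideanSpace.norm_sq_eq]; simp [sq]
  rw [h1, h2]
  calc ⟪T v', v'⟫ ≤ ‖T v'‖ * ‖v'‖ := real_inner_le_norm _ _
    _ ≤ (‖T‖ * ‖v'‖) * ‖v'‖ := by gcongr; exact T.le_opNorm v'
    _ = ‖T‖ * ‖v'‖ ^ 2 := by ring

lemma LSEM_mstep {E V : Type*} [Fintype E] [Fintype V] [DecidableEq V] [DecidableEq E]
    (A : Matrix E V ℝ) (b : E → ℝ) (w : E → ℝ) (μ τ : ℝ)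
    (hspec : specNorm (Aᵀ * Matrix.diagonal w * A) ≤ μ) (hτ0 : 0 < τ) (hτμ : τ * μ ≤ 1)
    (x : V → ℝ) :
    ∑ e, (1/2) * ((b - A.mulVec ((1 - τ • (Aᵀ * Matrix.diagonal w * A)).mulVec x
        + τ • (Aᵀ * Matrix.diagonal w).mulVec b)) e)^2 * w e
      ≤ ∑ e, (1/2) * ((b - A.mulVec x) e)^2 * w e := by
  set M := Aᵀ * Matrix.diagonal w * A with hM
  set d : V → ℝ := M.mulVec x - (Aᵀ * Matrix.diagonal w).mulVec b with hd
  set r : E → ℝ := b - A.mulVec x with hr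
  set u : E → ℝ := A.mulVec d with hu
  have hx' : (1 - τ • M).mulVec x + τ • (Aᵀ * Matrix.diagonal w).mulVec b = x - τ • d := by
    rw [Matrix.sub_mulVec, Matrix.one_mulVec, Matrix.smul_mulVec, hd, smul_sub]
    abel
  have hr' : b - A.mulVec (x - τ • d) = fun e => r e + τ * u e := by
    funext e
    rw [Matrix.mulVec_sub]
    simp [hr, hu, Matrix.mulVec_smul]
    ring
  have hAd : Aᵀ.mulVec (fun e => w e * r e) = -d := by
    have h1 : (fun e => w e * r e)
        = (Matrix.diagonal w).mulVec b - (Matrix.diagonal w).mulVec (A.mulVec x) := by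
      funext e
      simp only [Pi.sub_apply, Matrix.mulVec_diagonal, hr]; ring
    rw [h1, Matrix.mulVec_sub]
    simp only [Matrix.mulVec_mulVec]
    rw [← Matrix.mul_assoc, hd, hM]
    abel
  have key1 : ∑ e, (w e * r e) * u e = -(d ⬝ᵥ d) := by
    have : (fun e => w e * r e) ⬝ᵥ u = (Aᵀ.mulVec (fun e => w e * r e)) ⬝ᵥ d := by
      rw [hu, Matrix.dotProduct_mulVec, Matrix.mulVec_transpose]
    rw [hAd, neg_dotProduct] at this
    exact this
  have key2 : ∑ e, w e * u e * u e ≤ μ * (d ⬝ᵥ d) := by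
    have h1 : (fun e => w e * u e) ⬝ᵥ u = (Aᵀ.mulVec (fun e => w e * u e)) ⬝ᵥ d := by
      rw [hu, Matrix.dotProduct_mulVec, Matrix.mulVec_transpose]
    have h2 : Aᵀ.mulVec (fun e => w e * u e) = M.mulVec d := by
      have : (fun e => w e * u e) = (Matrix.diagonal w).mulVec (A.mulVec d) := by
        funext e; simp [hu, Matrix.mulVec_diagonal]
      rw [this]
      simp only [Matrix.mulVec_mulVec, hM]
      rw [← Matrix.mul_assoc]
    have h3 : (fun e => w e * u e) ⬝ᵥ u = M.mulVec d ⬝ᵥ d := by rw [h1, h2]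
    have h4 := LSEM_quadform_le M d
    have hDnn : 0 ≤ d ⬝ᵥ d := Finset.sum_nonneg fun v _ => mul_self_nonneg _
    calc ∑ e, w e * u e * u e = (fun e => w e * u e) ⬝ᵥ u := rfl
      _ = M.mulVec d ⬝ᵥ d := h3
      _ ≤ specNorm M * (d ⬝ᵥ d) := h4
      _ ≤ μ * (d ⬝ᵥ d) := mul_le_mul_of_nonneg_right hspec hDnn
  have hDnn : 0 ≤ d ⬝ᵥ d := Finset.sum_nonneg fun v _ => mul_self_nonneg _
  rw [hx', hr']
  have expand : ∑ e, (1/2) * (r e + τ * u e)^2 * w e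
      = (∑ e, (1/2) * (r e)^2 * w e) + τ * (∑ e, (w e * r e) * u e)
        + (τ^2/2) * (∑ e, w e * u e * u e) := by
    rw [Finset.mul_sum, Finset.mul_sum, ← Finset.sum_add_distrib, ← Finset.sum_add_distrib]
    exact Finset.sum_congr rfl fun e _ => by ring
  rw [expand, key1]
  have h5 : (τ^2/2) * (∑ e, w e * u e * u e) ≤ (τ^2/2) * (μ * (d ⬝ᵥ d)) :=
    mul_le_mul_of_nonneg_left key2 (by positivity)
  nlinarith [mul_nonneg hτ0.le hDnn, h5]

lemma LSEM_gibbs_term (π c : ℝ) (hπ0 : 0 ≤ π) (hc : 0 < c) :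
    π - c ≤ π * Real.log π - π * Real.log c := by
  rcases eq_or_lt_of_le hπ0 with h | h
  · simp [← h]; linarith
  · have h1 := Real.log_le_sub_one_of_pos (x := c / π) (by positivity)
    rw [Real.log_div hc.ne' h.ne'] at h1
    have h2 := mul_le_mul_of_nonneg_left h1 h.le
    have h3 : π * (c / π) = c := by field_simp
    rw [mul_sub, mul_sub, h3] at h2
    linarith

lemma LSEM_entropy_ge (π c : ℝ) (hπ : π ∈ Set.Icc (0:ℝ) 1) (hc0 : 0 < c) (hc1 : c < 1) :
    π * Real.log c + (1 - π) * Real.log (1 - c)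
      ≤ π * Real.log π + (1 - π) * Real.log (1 - π) := by
  have g1 := LSEM_gibbs_term π c hπ.1 hc0
  have g2 := LSEM_gibbs_term (1 - π) (1 - c) (by linarith [hπ.2]) (by linarith)
  linarith

lemma LSEM_estep (c1 c0 π : ℝ) (hπ : π ∈ Set.Icc (0:ℝ) 1) :
    Real.exp (-c1) / (Real.exp (-c1) + Real.exp (-c0)) * c1
      + (1 - Real.exp (-c1) / (Real.exp (-c1) + Real.exp (-c0))) * c0
      + Real.exp (-c1) / (Real.exp (-c1) + Real.exp (-c0))
          * Real.log (Real.exp (-c1) / (Real.exp (-c1) + Real.exp (-c0)))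
      + (1 - Real.exp (-c1) / (Real.exp (-c1) + Real.exp (-c0)))
          * Real.log (1 - Real.exp (-c1) / (Real.exp (-c1) + Real.exp (-c0)))
      ≤ π * c1 + (1 - π) * c0 + π * Real.log π + (1 - π) * Real.log (1 - π) := by
  set N := Real.exp (-c1) with hN'
  set D := Real.exp (-c0) with hD'
  have hN : 0 < N := Real.exp_pos _
  have hD : 0 < D := Real.exp_pos _
  have hND : 0 < N + D := by linarith
  set qs := N / (N + D) with hqs'
  have hqs0 : 0 < qs := by positivity
  have hqs1 : qs < 1 := by rw [hqs', div_lt_one hND]; linarith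
  have h1mq : 1 - qs = D / (N + D) := by rw [hqs']; field_simp; ring
  have hlogq : Real.log qs = -c1 - Real.log (N + D) := by
    rw [hqs', Real.log_div hN.ne' hND.ne', hN', Real.log_exp]
  have hlog1mq : Real.log (1 - qs) = -c0 - Real.log (N + D) := by
    rw [h1mq, Real.log_div hD.ne' hND.ne', hD', Real.log_exp]
  have key := LSEM_entropy_ge π qs hπ hqs0 hqs1
  rw [hlogq, hlog1mq] at key
  calc qs * c1 + (1 - qs) * c0 + qs * Real.log qs + (1 - qs) * Real.log (1 - qs)
      = -Real.log (N + D) := by rw [hlogq, hlog1mq]; ring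
    _ = π * c1 + (1 - π) * c0
        + (π * (-c1 - Real.log (N + D)) + (1 - π) * (-c0 - Real.log (N + D))) := by ring
    _ ≤ π * c1 + (1 - π) * c0 + (π * Real.log π + (1 - π) * Real.log (1 - π)) := by linarith
    _ = π * c1 + (1 - π) * c0 + π * Real.log π + (1 - π) * Real.log (1 - π) := by ring

end Aux

/-- monotonicity of the EM objective along the distributed LS-EM iterates. -/
theorem distributed_LSEM_monotone
    {E V : Type*} [Fintype E] [Fintype V] [DecidableEq V] [DecidableEq E]
    (A : Matrix E V ℝ) (b : E → ℝ)
    (α β p : ℝ) (hα : 0 < α) (hαβ : α < β) (hp : p ∈ Set.Ioo (0:ℝ) 1)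
    (μ τ : ℝ)
    (hμ : ∀ w : E → ℝ, (∀ e, w e ∈ Set.Icc (1 / β ^ 2) (1 / α ^ 2)) →
      specNorm (Aᵀ * Matrix.diagonal w * A) ≤ μ)
    (hτ0 : 0 < τ) (hτ : τ ≤ 1 / μ)
    (x : ℕ → V → ℝ) (q : ℕ → E → ℝ)
    (hq0 : ∀ e, q 0 e ∈ Set.Icc (0:ℝ) 1)
    (hxrec : ∀ t, x (t + 1) =
      (1 - τ • (Aᵀ * Matrix.diagonal (fun e => (1 - q t e) / α ^ 2 + q t e / β ^ 2) * A)).mulVec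
          (x t) +
        τ • (Aᵀ * Matrix.diagonal (fun e => (1 - q t e) / α ^ 2 + q t e / β ^ 2)).mulVec b)
    (hqrec : ∀ t e, q (t + 1) e =
      (p / β) * Real.exp (-((b - A.mulVec (x (t+1))) e) ^ 2 / (2 * β ^ 2)) /
        ((p / β) * Real.exp (-((b - A.mulVec (x (t+1))) e) ^ 2 / (2 * β ^ 2))
          + ((1 - p) / α) * Real.exp (-((b - A.mulVec (x (t+1))) e) ^ 2 / (2 * α ^ 2)))) :
    let Vf : (V → ℝ) → (E → ℝ) → ℝ := fun y π => ∑ e : E,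
      ((1/2) * ((b - A.mulVec y) e) ^ 2 * ((1 - π e) / α ^ 2 + π e / β ^ 2)
        - π e * Real.log (p / β) - (1 - π e) * Real.log ((1 - p) / α)
        + π e * Real.log (π e) + (1 - π e) * Real.log (1 - π e))
    ∀ t : ℕ, Vf (x (t + 1)) (q (t + 1)) ≤ Vf (x t) (q t) := by
  intro Vf t
  have hβ : 0 < β := hα.trans hαβ
  have hpβ : 0 < p / β := div_pos hp.1 hβ
  have hpα : 0 < (1 - p) / α := div_pos (by linarith [hp.2]) hα
  have hqmem : ∀ s e, q s e ∈ Set.Icc (0:ℝ) 1 := by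
    intro s e
    cases s with
    | zero => exact hq0 e
    | succ n =>
      rw [hqrec n e]
      have hN : 0 < (p / β) * Real.exp (-((b - A.mulVec (x (n+1))) e) ^ 2 / (2 * β ^ 2)) :=
        mul_pos hpβ (Real.exp_pos _)
      have hD : 0 < ((1 - p) / α) * Real.exp (-((b - A.mulVec (x (n+1))) e) ^ 2 / (2 * α ^ 2)) :=
        mul_pos hpα (Real.exp_pos _)
      constructor
      · positivity
      · rw [div_le_one (by linarith)]; linarith
  have hab : 1 / β ^ 2 ≤ 1 / α ^ 2 :=
    one_div_le_one_div_of_le (by positivity) (by nlinarith)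
  have hwmem : ∀ s, ∀ e : E, ((1 - q s e) / α ^ 2 + q s e / β ^ 2)
      ∈ Set.Icc (1 / β ^ 2) (1 / α ^ 2) := by
    intro s e
    obtain ⟨h0, h1⟩ := hqmem s e
    have h2 : (1 - q s e) * (1/β^2) ≤ (1 - q s e) * (1/α^2) :=
      mul_le_mul_of_nonneg_left hab (by linarith)
    have h3 : q s e * (1/β^2) ≤ q s e * (1/α^2) :=
      mul_le_mul_of_nonneg_left hab h0
    have e1 : (1 - q s e)/α^2 + q s e/β^2 = (1 - q s e) * (1/α^2) + q s e * (1/β^2) := by ring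
    have e2 : (1 - q s e) * (1/β^2) + q s e * (1/β^2) = 1/β^2 := by ring
    have e3 : (1 - q s e) * (1/α^2) + q s e * (1/α^2) = 1/α^2 := by ring
    constructor
    · rw [e1]; linarith
    · rw [e1]; linarith
  have hμ0 : 0 ≤ μ :=
    le_trans (norm_nonneg _) (hμ (fun _ => 1 / β ^ 2) (fun e => ⟨le_refl _, hab⟩))
  have hμpos : 0 < μ := by
    rcases hμ0.lt_or_eq with h | h
    · exact h
    · exfalso; rw [← h] at hτ; simp at hτ; linarith
  have hτμ : τ * μ ≤ 1 := (le_div_iff₀ hμpos).mp hτ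
  have hMstep : Vf (x (t + 1)) (q t) ≤ Vf (x t) (q t) := by
    have hsplit : ∀ y : V → ℝ, Vf y (q t)
        = (∑ e, (1/2) * ((b - A.mulVec y) e)^2 * ((1 - q t e) / α ^ 2 + q t e / β ^ 2))
          + ∑ e : E, (- q t e * Real.log (p / β) - (1 - q t e) * Real.log ((1 - p) / α)
              + q t e * Real.log (q t e) + (1 - q t e) * Real.log (1 - q t e)) := by
      intro y
      simp only [Vf]
      rw [← Finset.sum_add_distrib]
      exact Finset.sum_congr rfl fun e _ => by ring
    rw [hsplit (x (t + 1)), hsplit (x t), hxrec t]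
    exact add_le_add_left
      (LSEM_mstep A b (fun e => (1 - q t e) / α ^ 2 + q t e / β ^ 2) μ τ
        (hμ _ (hwmem t)) hτ0 hτμ (x t)) _
  have hEstep : Vf (x (t + 1)) (q (t + 1)) ≤ Vf (x (t + 1)) (q t) := by
    simp only [Vf]
    apply Finset.sum_le_sum
    intro e _
    set r := (b - A.mulVec (x (t + 1))) e with hrdef
    set c1 := r ^ 2 / (2 * β ^ 2) - Real.log (p / β) with hc1def
    set c0 := r ^ 2 / (2 * α ^ 2) - Real.log ((1 - p) / α) with hc0def
    have hc1 : (p / β) * Real.exp (-r ^ 2 / (2 * β ^ 2)) = Real.exp (-c1) := by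
      rw [show -c1 = Real.log (p / β) + -r ^ 2 / (2 * β ^ 2) by rw [hc1def]; ring,
        Real.exp_add, Real.exp_log hpβ]
    have hc0 : ((1 - p) / α) * Real.exp (-r ^ 2 / (2 * α ^ 2)) = Real.exp (-c0) := by
      rw [show -c0 = Real.log ((1 - p) / α) + -r ^ 2 / (2 * α ^ 2) by rw [hc0def]; ring,
        Real.exp_add, Real.exp_log hpα]
    have hqe : q (t + 1) e = Real.exp (-c1) / (Real.exp (-c1) + Real.exp (-c0)) := by
      rw [hqrec t e, ← hrdef, hc1, hc0]
    have key := LSEM_estep c1 c0 (q t e) (hqmem t e)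
    rw [hqe]
    calc (1/2) * r ^ 2 * ((1 - Real.exp (-c1) / (Real.exp (-c1) + Real.exp (-c0))) / α ^ 2
            + Real.exp (-c1) / (Real.exp (-c1) + Real.exp (-c0)) / β ^ 2)
          - Real.exp (-c1) / (Real.exp (-c1) + Real.exp (-c0)) * Real.log (p / β)
          - (1 - Real.exp (-c1) / (Real.exp (-c1) + Real.exp (-c0))) * Real.log ((1 - p) / α)
          + Real.exp (-c1) / (Real.exp (-c1) + Real.exp (-c0))
              * Real.log (Real.exp (-c1) / (Real.exp (-c1) + Real.exp (-c0)))
          + (1 - Real.exp (-c1) / (Real.exp (-c1) + Real.exp (-c0)))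
              * Real.log (1 - Real.exp (-c1) / (Real.exp (-c1) + Real.exp (-c0)))
        = Real.exp (-c1) / (Real.exp (-c1) + Real.exp (-c0)) * c1
          + (1 - Real.exp (-c1) / (Real.exp (-c1) + Real.exp (-c0))) * c0
          + Real.exp (-c1) / (Real.exp (-c1) + Real.exp (-c0))
              * Real.log (Real.exp (-c1) / (Real.exp (-c1) + Real.exp (-c0)))
          + (1 - Real.exp (-c1) / (Real.exp (-c1) + Real.exp (-c0)))
              * Real.log (1 - Real.exp (-c1) / (Real.exp (-c1) + Real.exp (-c0))) := by
          rw [hc1def, hc0def]; ring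
      _ ≤ q t e * c1 + (1 - q t e) * c0 + q t e * Real.log (q t e)
          + (1 - q t e) * Real.log (1 - q t e) := key
      _ = (1/2) * r ^ 2 * ((1 - q t e) / α ^ 2 + q t e / β ^ 2)
          - q t e * Real.log (p / β) - (1 - q t e) * Real.log ((1 - p) / α)
          + q t e * Real.log (q t e) + (1 - q t e) * Real.log (1 - q t e) := by
          rw [hc1def, hc0def]; ring
  exact hEstep.trans hMstep
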